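/- Let B be a finite set of reals, and let D = {d_1 < d_2 < ... < d_m} be the set of positive elements of the difference set B - B. For b, b' ∈ B with b > b', let n_B(b', b) denote the number of elements of B + B - B lying in the interval (b', b]. If n_B(b', b) ≤ Z for some positive integer Z ≤ m, then b - b' ≤ d_Z; in particular, b - b' is one of the Z smallest positive differences d_1, ..., d_Z. -/

import Mathlib

open scoped Pointwise

/-- let `D = {d_1 < ⋯ < d_m}` be the positive elements of `B - B`.
If `b, b' ∈ B`, `b' < b`, `1 ≤ Z ≤ m`, and the number of elements of
`B + B - B` in `(b', b]` is at most `Z`, then `b - b' ≤ d_Z`, i.e. at most `Z`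
positive differences in `B - B` are `≤ b - b'`. -/
theorem stmt6 (B : Finset ℝ) (b b' : ℝ) (hb : b ∈ B) (hb' : b' ∈ B) (hlt : b' < b)
    (Z : ℕ) (hZ1 : 1 ≤ Z)
    (hZm : Z ≤ ((B - B).filter (fun d => 0 < d)).card)
    (hn : ((B + B - B).filter (fun x => b' < x ∧ x ≤ b)).card ≤ Z) :
    ((B - B).filter (fun d => 0 < d ∧ d ≤ b - b')).card ≤ Z := by
  refine le_trans (Finset.card_le_card_of_injOn (fun d => b' + d) ?_ ?_) hn
  · intro d hd
    simp only [Finset.mem_coe, Finset.mem_filter] at hd ⊢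
    obtain ⟨hdBB, hd0, hdle⟩ := hd
    refine ⟨?_, by linarith, by linarith⟩
    rw [Finset.mem_sub] at hdBB
    obtain ⟨x, hx, y, hy, rfl⟩ := hdBB
    rw [Finset.mem_sub]
    exact ⟨b' + x, Finset.add_mem_add hb' hx, y, hy, by ring⟩
  · intro a _ c _ h
    simpa using h
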